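/- For permutations v, w of {1,...,n} written in one-line notation (v_1,...,v_n), the Bruhat order (transitive closure of transpositions that increase the number of inversions by any amount, i.e., v ≤ w when w is obtained from v by a sequence of swaps putting larger values earlier) coincides with the Deodhar order: for every k, the non-increasing rearrangement of (v_1,...,v_k) is entrywise at most that of (w_1,...,w_k). -/

import Mathlib

/-- coinv: number of pairs i < j with 0 < a i < a j. -/
def coinv (n : ℕ) (a : Fin n → ℕ) : ℕ :=
  (Finset.univ.filter (fun p : Fin n × Fin n => p.1 < p.2 ∧ 0 < a p.1 ∧ a p.1 < a p.2)).card

/-- Length of a rook-monoid sequence: ∑_{i : a_i ≠ 0} (a_i + n - i) - coinv (1-based i). -/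
def rookLen (n : ℕ) (a : Fin n → ℕ) : ℤ :=
  (∑ i : Fin n, if a i ≠ 0 then ((a i : ℤ) + n - (i.val + 1)) else 0) - coinv n a

/-- A rook-monoid sequence: entries in {0,...,n} with distinct nonzero entries. -/
def IsRook (n : ℕ) (a : Fin n → ℕ) : Prop :=
  (∀ i, a i ≤ n) ∧ ∀ i j : Fin n, i ≠ j → a i ≠ 0 → a i ≠ a j

/-- Non-increasing rearrangement of a list. -/
def sortDesc (l : List ℕ) : List ℕ := l.insertionSort (· ≥ ·)

/-- Containment order: entrywise comparison of non-increasing rearrangements. -/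
def contLE (l m : List ℕ) : Prop := List.Forall₂ (· ≤ ·) (sortDesc l) (sortDesc m)

/-- Deodhar order: containment of all truncations. -/
def deodharLE (n : ℕ) (x y : Fin n → ℕ) : Prop :=
  ∀ k : ℕ, k ≤ n → contLE ((List.ofFn x).take k) ((List.ofFn y).take k)

/-- One-line notation for a permutation of {1,...,n}. -/
def IsOneLine (n : ℕ) (v : Fin n → ℕ) : Prop :=
  (∀ i, 1 ≤ v i ∧ v i ≤ n) ∧ Function.Injective v

/-- Elementary Bruhat move: swap positions i < j with v i < v j. -/
def bruhatStep (n : ℕ) (v w : Fin n → ℕ) : Prop :=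
  ∃ i j : Fin n, i < j ∧ v i < v j ∧ w i = v j ∧ w j = v i ∧
    ∀ k, k ≠ i → k ≠ j → w k = v k


namespace BD
open Finset

variable {n : ℕ}

/-- counting sum: number of positions l < k with t ≤ v l -/
def cntF (n : ℕ) (v : Fin n → ℕ) (k t : ℕ) : ℕ :=
  ∑ l : Fin n, if l.val < k ∧ t ≤ v l then 1 else 0

def cmid (n : ℕ) (v : Fin n → ℕ) (i k t : ℕ) : ℕ :=
  ∑ l : Fin n, if i < l.val ∧ l.val < k ∧ t ≤ v l then 1 else 0

lemma split3 (v : Fin n → ℕ) (i : Fin n) (k t : ℕ) (hik : i.val < k) :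
    cntF n v k t = cntF n v i.val t + (if t ≤ v i then 1 else 0) + cmid n v i.val k t := by
  have hmid : (if t ≤ v i then (1:ℕ) else 0)
      = ∑ l : Fin n, if l = i then (if t ≤ v l then (1:ℕ) else 0) else 0 := by
    rw [Finset.sum_ite_eq' Finset.univ i]
    simp
  rw [cntF, cntF, cmid, hmid, ← Finset.sum_add_distrib, ← Finset.sum_add_distrib]
  refine Finset.sum_congr rfl fun l _ => ?_
  by_cases hli : l = i
  · subst hli
    simp only [if_pos rfl]
    split_ifs <;> omega
  · have hne : l.val ≠ i.val := fun h => hli (Fin.ext h)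
    simp only [if_neg hli]
    split_ifs <;> omega

lemma cntF_low (v v' : Fin n → ℕ) (k t : ℕ) (h : ∀ l : Fin n, l.val < k → v' l = v l) :
    cntF n v' k t = cntF n v k t := by
  refine Finset.sum_congr rfl fun l _ => ?_
  by_cases hl : l.val < k
  · rw [h l hl]
  · simp [hl]

lemma cmid_congr (v v' : Fin n → ℕ) (i k t : ℕ)
    (h : ∀ l : Fin n, i < l.val → l.val < k → v' l = v l) :
    cmid n v' i k t = cmid n v i k t := by
  refine Finset.sum_congr rfl fun l _ => ?_
  by_cases h1 : i < l.val
  · by_cases h2 : l.val < k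
    · rw [h l h1 h2]
    · simp [h2]
  · simp [h1]

lemma cntF_swap (i j : Fin n) (hij : i ≠ j) (u u' : Fin n → ℕ)
    (h1 : u' i = u j) (h2 : u' j = u i) (h3 : ∀ l, l ≠ i → l ≠ j → u' l = u l)
    (k t : ℕ) (hik : i.val < k) (hjk : j.val < k) :
    cntF n u' k t = cntF n u k t := by
  have hcomp := Equiv.sum_comp (Equiv.swap i j)
    (fun l : Fin n => if l.val < k ∧ t ≤ u' l then (1:ℕ) else 0)
  rw [cntF, cntF, ← hcomp]
  refine Finset.sum_congr rfl fun l _ => ?_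
  rcases eq_or_ne l i with rfl | hli
  · rw [Equiv.swap_apply_left, h2]
    simp [hik, hjk]
  · rcases eq_or_ne l j with rfl | hlj
    · rw [Equiv.swap_apply_right, h1]
      simp [hik, hjk]
    · rw [Equiv.swap_apply_of_ne_of_ne hli hlj, h3 l hli hlj]

lemma cntF_mid (i j : Fin n) (u u' : Fin n → ℕ)
    (h1 : u' i = u j) (h2 : u' j = u i) (h3 : ∀ l, l ≠ i → l ≠ j → u' l = u l)
    (k t : ℕ) (hik : i.val < k) (hkj : k ≤ j.val) :
    cntF n u' k t + (if t ≤ u i then 1 else 0)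
      = cntF n u k t + (if t ≤ u j then 1 else 0) := by
  have hij : i.val < j.val := lt_of_lt_of_le hik hkj
  have e1 : cntF n u' i.val t = cntF n u i.val t := by
    refine cntF_low u u' i.val t fun l hl => ?_
    exact h3 l (fun h => by subst h; omega) (fun h => by subst h; omega)
  have e2 : cmid n u' i.val k t = cmid n u i.val k t := by
    refine cmid_congr u u' i.val k t fun l ha hb => ?_
    exact h3 l (fun h => by subst h; omega) (fun h => by subst h; omega)
  rw [split3 u' i k t hik, split3 u i k t hik, e1, e2, h1]
  ring

lemma cntF_succ (v : Fin n → ℕ) (i : Fin n) (t : ℕ) :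
    cntF n v (i.val + 1) t = cntF n v i.val t + (if t ≤ v i then 1 else 0) := by
  rw [split3 v i (i.val+1) t (Nat.lt_succ_self _)]
  have hz : cmid n v i.val (i.val+1) t = 0 := by
    refine Finset.sum_eq_zero fun l _ => ?_
    split_ifs with h
    · omega
    · rfl
  rw [hz]; ring

lemma step_counts (u u' : Fin n → ℕ) (h : bruhatStep n u u') (k t : ℕ) :
    cntF n u k t ≤ cntF n u' k t := by
  obtain ⟨i, j, hij, hlt, h1, h2, h3⟩ := h
  have hijv : i.val < j.val := hij
  rcases Nat.lt_or_ge i.val k with hik | hik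
  · rcases Nat.lt_or_ge j.val k with hjk | hjk
    · rw [cntF_swap i j (Fin.ne_of_lt hij) u u' h1 h2 h3 k t hik hjk]
    · have hm := cntF_mid i j u u' h1 h2 h3 k t hik hjk
      have mono : (if t ≤ u i then (1:ℕ) else 0) ≤ (if t ≤ u j then 1 else 0) := by
        split_ifs <;> omega
      omega
  · have heq : cntF n u' k t = cntF n u k t := by
      refine cntF_low u u' k t fun l hl => ?_
      exact h3 l (fun h => by subst h; omega) (fun h => by subst h; omega)
    omega

end BD
def cnt (t : ℕ) (l : List ℕ) : ℕ := l.countP (fun x => decide (t ≤ x))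

lemma cnt_nil (t : ℕ) : cnt t [] = 0 := rfl

lemma cnt_cons (t a : ℕ) (l : List ℕ) :
    cnt t (a :: l) = cnt t l + (if t ≤ a then 1 else 0) := by
  simp [cnt, List.countP_cons]

lemma cnt_perm {l l' : List ℕ} (h : l.Perm l') (t : ℕ) : cnt t l = cnt t l' :=
  h.countP_eq _

lemma cnt_eq_zero_of_forall {t : ℕ} {l : List ℕ} (h : ∀ x ∈ l, x < t) : cnt t l = 0 := by
  rw [cnt, List.countP_eq_zero]
  intro x hx
  simpa using Nat.not_le.mpr (h x hx)

lemma cnt_of_forall₂ {l m : List ℕ} (h : List.Forall₂ (· ≤ ·) l m) (t : ℕ) :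
    cnt t l ≤ cnt t m := by
  induction h with
  | nil => simp
  | @cons a b l1 l2 hab htail ih =>
    rw [cnt_cons, cnt_cons]
    have : (if t ≤ a then (1:ℕ) else 0) ≤ (if t ≤ b then 1 else 0) := by
      split_ifs with h1 h2
      · omega
      · exact absurd (le_trans h1 hab) h2
      · omega
      · omega
    omega

lemma forall₂_of_cnt : ∀ l m : List ℕ, l.Pairwise (· ≥ ·) → m.Pairwise (· ≥ ·) →
    l.length = m.length → (∀ t, cnt t l ≤ cnt t m) → List.Forall₂ (· ≤ ·) l m := by
  intro l
  induction l with
  | nil =>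
    intro m _ _ hlen _
    cases m with
    | nil => exact List.Forall₂.nil
    | cons b m' => simp at hlen
  | cons a l ih =>
    intro m hl hm hlen hcnt
    cases m with
    | nil => simp at hlen
    | cons b m' =>
      obtain ⟨hal, hl'⟩ := List.pairwise_cons.mp hl
      obtain ⟨hbm, hm'⟩ := List.pairwise_cons.mp hm
      have hab : a ≤ b := by
        by_contra hcon
        push_neg at hcon
        have h1 := hcnt a
        rw [cnt_cons, cnt_cons] at h1
        have h2 : cnt a m' = 0 := cnt_eq_zero_of_forall fun x hx => lt_of_le_of_lt (hbm x hx) hcon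
        rw [if_pos le_rfl, if_neg (Nat.not_le.mpr hcon), h2] at h1
        omega
      refine List.Forall₂.cons hab (ih m' hl' hm' (by simpa using hlen) fun t => ?_)
      rcases le_or_gt t a with ht | ht
      · have h1 := hcnt t
        rw [cnt_cons, cnt_cons, if_pos ht, if_pos (le_trans ht hab)] at h1
        omega
      · have h2 : cnt t l = 0 := cnt_eq_zero_of_forall fun x hx => lt_of_le_of_lt (hal x hx) ht
        omega

lemma sortDesc_perm (l : List ℕ) : (sortDesc l).Perm l := List.perm_insertionSort _ _

lemma sortDesc_sorted (l : List ℕ) : (sortDesc l).Pairwise (· ≥ ·) :=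
  List.pairwise_insertionSort _ _

lemma contLE_iff (l m : List ℕ) :
    contLE l m ↔ (l.length = m.length ∧ ∀ t, cnt t l ≤ cnt t m) := by
  constructor
  · intro h
    constructor
    · have := h.length_eq
      rwa [(sortDesc_perm l).length_eq, (sortDesc_perm m).length_eq] at this
    · intro t
      rw [← cnt_perm (sortDesc_perm l) t, ← cnt_perm (sortDesc_perm m) t]
      exact cnt_of_forall₂ h t
  · rintro ⟨hlen, hcnt⟩
    refine forall₂_of_cnt _ _ (sortDesc_sorted l) (sortDesc_sorted m) ?_ fun t => ?_
    · rw [(sortDesc_perm l).length_eq, (sortDesc_perm m).length_eq]; exact hlen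
    · rw [cnt_perm (sortDesc_perm l) t, cnt_perm (sortDesc_perm m) t]
      exact hcnt t

lemma cnt_take {n : ℕ} (v : Fin n → ℕ) :
    ∀ k, k ≤ n → ∀ t, cnt t ((List.ofFn v).take k) = BD.cntF n v k t := by
  intro k
  induction k with
  | zero =>
    intro _ t
    simp only [List.take_zero, cnt_nil]
    exact (Finset.sum_eq_zero fun l _ => by simp).symm
  | succ k ih =>
    intro hk t
    have hk' : k < n := hk
    have hsplit : (List.ofFn v).take (k+1) = (List.ofFn v).take k ++ [v ⟨k, hk'⟩] := by
      rw [List.take_succ]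
      congr 1
      simp [List.getElem?_ofFn, hk']
    rw [hsplit]
    have : cnt t ((List.ofFn v).take k ++ [v ⟨k, hk'⟩])
        = cnt t ((List.ofFn v).take k) + cnt t [v ⟨k, hk'⟩] := by
      simp [cnt, List.countP_append]
    rw [this, ih (le_of_lt hk') t]
    have hone : cnt t [v ⟨k, hk'⟩] = if t ≤ v ⟨k, hk'⟩ then 1 else 0 := by
      rw [show ([v ⟨k, hk'⟩] : List ℕ) = v ⟨k, hk'⟩ :: [] from rfl, cnt_cons, cnt_nil]
      omega
    rw [hone]
    exact (BD.cntF_succ v ⟨k, hk'⟩ t).symm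

lemma deodhar_iff {n : ℕ} (v w : Fin n → ℕ) :
    deodharLE n v w ↔ ∀ k ≤ n, ∀ t, BD.cntF n v k t ≤ BD.cntF n w k t := by
  constructor
  · intro h k hk t
    have := (contLE_iff _ _).mp (h k hk)
    rw [← cnt_take v k hk t, ← cnt_take w k hk t]
    exact this.2 t
  · intro h k hk
    refine (contLE_iff _ _).mpr ⟨by simp, fun t => ?_⟩
    rw [cnt_take v k hk t, cnt_take w k hk t]
    exact h k hk t
namespace BD

def Mw (n : ℕ) (v : Fin n → ℕ) : ℕ :=
  ∑ k ∈ Finset.range (n+1), ∑ t ∈ Finset.range (n+1), cntF n v k t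

lemma M_le {n : ℕ} {v w : Fin n → ℕ}
    (h : ∀ k ≤ n, ∀ t, cntF n v k t ≤ cntF n w k t) : Mw n v ≤ Mw n w := by
  refine Finset.sum_le_sum fun k hk => Finset.sum_le_sum fun t _ => ?_
  exact h k (Nat.lt_succ_iff.mp (Finset.mem_range.mp hk)) t

lemma exists_step {n : ℕ} (v w : Fin n → ℕ) (hv : IsOneLine n v) (hw : IsOneLine n w)
    (hne : v ≠ w) (hd : ∀ k ≤ n, ∀ t, cntF n v k t ≤ cntF n w k t) :
    ∃ v', bruhatStep n v v' ∧ IsOneLine n v' ∧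
      (∀ k ≤ n, ∀ t, cntF n v' k t ≤ cntF n w k t) ∧ Mw n v < Mw n v' := by
  classical
  -- minimal position where v and w differ
  have hSne : (Finset.univ.filter (fun l : Fin n => v l ≠ w l)).Nonempty := by
    obtain ⟨l, hl⟩ := Function.ne_iff.mp hne
    exact ⟨l, Finset.mem_filter.mpr ⟨Finset.mem_univ l, hl⟩⟩
  set i := (Finset.univ.filter (fun l : Fin n => v l ≠ w l)).min' hSne with hidef
  have hi : v i ≠ w i := (Finset.mem_filter.mp ((Finset.univ.filter _).min'_mem hSne)).2
  have hmin : ∀ l : Fin n, v l ≠ w l → i ≤ l := fun l hl =>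
    Finset.min'_le _ l (Finset.mem_filter.mpr ⟨Finset.mem_univ l, hl⟩)
  have hlow : ∀ l : Fin n, l.val < i.val → v l = w l := by
    intro l hl
    by_contra hcon
    exact absurd (hmin l hcon) (not_le.mpr (Fin.lt_def.mpr hl))
  -- v i < w i
  have hvi_wi : v i < w i := by
    have h1 := hd (i.val + 1) (by omega) (v i)
    rw [cntF_succ v i, cntF_succ w i] at h1
    have hcomm : cntF n v i.val (v i) = cntF n w i.val (v i) :=
      (cntF_low w v i.val (v i) hlow)
    rw [hcomm, if_pos le_rfl] at h1
    rcases Nat.lt_or_ge (v i) (w i) with h | h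
    · exact h
    · exfalso
      have : v i = w i := by
        rw [if_neg (by omega : ¬ v i ≤ w i)] at h1
        omega
      exact hi this
  -- a position p > i with v p = w i
  have himg : Finset.image v Finset.univ = Finset.Icc 1 n := by
    apply Finset.eq_of_subset_of_card_le
    · intro x hx
      obtain ⟨l, _, rfl⟩ := Finset.mem_image.mp hx
      exact Finset.mem_Icc.mpr ⟨(hv.1 l).1, (hv.1 l).2⟩
    · rw [Finset.card_image_of_injective _ hv.2]
      simp [Nat.card_Icc]
  have hwiIcc : w i ∈ Finset.Icc 1 n := Finset.mem_Icc.mpr ⟨(hw.1 i).1, (hw.1 i).2⟩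
  obtain ⟨p, _, hp⟩ := Finset.mem_image.mp (himg ▸ hwiIcc)
  have hpi : i < p := by
    rcases lt_trichotomy p i with h | h | h
    · exfalso
      have := hlow p (Fin.lt_def.mp h)
      rw [this] at hp
      exact absurd (hw.2 hp) (Fin.ne_of_lt h)
    · exfalso; rw [h] at hp; exact hi hp
    · exact h
  -- the set J and its minimum j
  have hJne : (Finset.univ.filter (fun l : Fin n => i < l ∧ v i < v l ∧ v l ≤ w i)).Nonempty :=
    ⟨p, Finset.mem_filter.mpr ⟨Finset.mem_univ p, hpi, hp ▸ hvi_wi, le_of_eq hp⟩⟩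
  set j := (Finset.univ.filter (fun l : Fin n => i < l ∧ v i < v l ∧ v l ≤ w i)).min' hJne
    with hjdef
  have hjmem := Finset.mem_filter.mp ((Finset.univ.filter _).min'_mem hJne)
  have hij : i < j := hjmem.2.1
  have hvij : v i < v j := hjmem.2.2.1
  have hvjwi : v j ≤ w i := hjmem.2.2.2
  have hjmin : ∀ l : Fin n, i < l → v i < v l → v l ≤ w i → j ≤ l := fun l h1 h2 h3 =>
    Finset.min'_le _ l (Finset.mem_filter.mpr ⟨Finset.mem_univ l, h1, h2, h3⟩)
  have hijv : i.val < j.val := hij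
  -- the swapped function
  set v' : Fin n → ℕ := fun l => v (Equiv.swap i j l) with hv'def
  have hv'i : v' i = v j := by simp [hv'def, Equiv.swap_apply_left]
  have hv'j : v' j = v i := by simp [hv'def, Equiv.swap_apply_right]
  have hv'o : ∀ l, l ≠ i → l ≠ j → v' l = v l := fun l h1 h2 => by
    simp [hv'def, Equiv.swap_apply_of_ne_of_ne h1 h2]
  have hstep : bruhatStep n v v' := ⟨i, j, hij, hvij, hv'i, hv'j, hv'o⟩
  have hol : IsOneLine n v' :=
    ⟨fun l => hv.1 _, hv.2.comp (Equiv.swap i j).injective⟩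
  -- key inequality
  have hkey : ∀ k t, i.val < k → k ≤ j.val → k ≤ n → v i < t → t ≤ v j →
      cntF n v k t + 1 ≤ cntF n w k t := by
    intro k t h1 h2 hk ht1 ht2
    have htwi : t ≤ w i := le_trans ht2 hvjwi
    have hcomm1 : cntF n v i.val t = cntF n w i.val t := cntF_low w v i.val t hlow
    have hcomm2 : cntF n v i.val (w i + 1) = cntF n w i.val (w i + 1) :=
      cntF_low w v i.val (w i + 1) hlow
    have hsv : cntF n v k t = cntF n w i.val t + cmid n v i.val k t := by
      rw [split3 v i k t h1, if_neg (by omega : ¬ t ≤ v i), hcomm1]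
      omega
    have hsw : cntF n w k t = cntF n w i.val t + 1 + cmid n w i.val k t := by
      rw [split3 w i k t h1, if_pos htwi]
    have hBv : cmid n v i.val k t = cmid n v i.val k (w i + 1) := by
      refine Finset.sum_congr rfl fun l _ => ?_
      by_cases hc : i.val < l.val ∧ l.val < k
      · have hiff : (t ≤ v l) ↔ (w i + 1 ≤ v l) := by
          constructor
          · intro hle
            by_contra hcon
            have hvl : v l ≤ w i := by omega
            have hil : i < l := Fin.lt_def.mpr hc.1
            have := hjmin l hil (by omega) hvl
            have : j.val ≤ l.val := this
            omega
          · intro hle; omega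
        split_ifs with ha hb hb
        · rfl
        · exact absurd ⟨ha.1, ha.2.1, hiff.mp ha.2.2⟩ hb
        · exact absurd ⟨hb.1, hb.2.1, hiff.mpr hb.2.2⟩ ha
        · rfl
      · split_ifs with ha hb hb
        · exact absurd ⟨ha.1, ha.2.1⟩ hc
        · exact absurd ⟨ha.1, ha.2.1⟩ hc
        · exact absurd ⟨hb.1, hb.2.1⟩ hc
        · rfl
    have hA : cmid n v i.val k (w i + 1) ≤ cmid n w i.val k (w i + 1) := by
      have h0 := hd k hk (w i + 1)
      rw [split3 v i k _ h1, split3 w i k _ h1,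
        if_neg (by omega : ¬ w i + 1 ≤ v i), if_neg (by omega : ¬ w i + 1 ≤ w i),
        hcomm2] at h0
      omega
    have hAB : cmid n w i.val k (w i + 1) ≤ cmid n w i.val k t := by
      refine Finset.sum_le_sum fun l _ => ?_
      split_ifs with ha hb
      · omega
      · exact absurd ⟨ha.1, ha.2.1, by omega⟩ hb
      · omega
      · omega
    omega
  -- counts for v'
  have hc' : ∀ k ≤ n, ∀ t, cntF n v' k t ≤ cntF n w k t := by
    intro k hk t
    rcases Nat.lt_or_ge i.val k with h1 | h1
    · rcases Nat.lt_or_ge j.val k with h2 | h2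
      · rw [cntF_swap i j (Fin.ne_of_lt hij) v v' hv'i hv'j hv'o k t h1 h2]
        exact hd k hk t
      · have hm := cntF_mid i j v v' hv'i hv'j hv'o k t h1 h2
        rcases le_or_gt t (v i) with ht | ht
        · rw [if_pos ht, if_pos (le_trans ht (le_of_lt hvij))] at hm
          have := hd k hk t
          omega
        · rcases le_or_gt t (v j) with ht2 | ht2
          · rw [if_neg (by omega), if_pos ht2] at hm
            have := hkey k t h1 h2 hk ht ht2
            omega
          · rw [if_neg (by omega), if_neg (by omega)] at hm
            have := hd k hk t
            omega
    · have heq : cntF n v' k t = cntF n v k t := by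
        refine cntF_low v v' k t fun l hl => ?_
        exact hv'o l (fun h => by subst h; omega) (fun h => by subst h; omega)
      rw [heq]; exact hd k hk t
  -- measure strictly increases
  have hle : ∀ k t, cntF n v k t ≤ cntF n v' k t := step_counts v v' hstep
  have hstrict : cntF n v (i.val+1) (v j) < cntF n v' (i.val+1) (v j) := by
    have hc : cntF n v' i.val (v j) = cntF n v i.val (v j) := by
      refine cntF_low v v' i.val (v j) fun l hl => ?_
      exact hv'o l (fun h => by subst h; omega) (fun h => by subst h; omega)
    rw [cntF_succ v i, cntF_succ v' i, hc, hv'i,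
      if_pos le_rfl, if_neg (by omega : ¬ v j ≤ v i)]
    omega
  have hM : Mw n v < Mw n v' := by
    refine Finset.sum_lt_sum (fun k _ => Finset.sum_le_sum fun t _ => hle k t) ?_
    refine ⟨i.val + 1, Finset.mem_range.mpr (by omega), ?_⟩
    refine Finset.sum_lt_sum (fun t _ => hle _ t) ?_
    refine ⟨v j, Finset.mem_range.mpr (by have := (hv.1 j).2; omega), hstrict⟩
  exact ⟨v', hstep, hol, hc', hM⟩

lemma backward {n : ℕ} (w : Fin n → ℕ) (hw : IsOneLine n w) :
    ∀ d : ℕ, ∀ v, IsOneLine n v → (∀ k ≤ n, ∀ t, cntF n v k t ≤ cntF n w k t) →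
      Mw n w - Mw n v = d → Relation.ReflTransGen (bruhatStep n) v w := by
  intro d
  induction d using Nat.strong_induction_on with
  | _ d ih =>
    intro v hv hd hM
    by_cases hne : v = w
    · subst hne; exact Relation.ReflTransGen.refl
    · obtain ⟨v', hb, hol, hc', hlt⟩ := exists_step v w hv hw hne hd
      have hM' : Mw n v' ≤ Mw n w := M_le hc'
      exact Relation.ReflTransGen.head hb
        (ih (Mw n w - Mw n v') (by omega) v' hol hc' rfl)

end BD

theorem bruhat_eq_deodhar (n : ℕ) (v w : Fin n → ℕ) (hv : IsOneLine n v)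
    (hw : IsOneLine n w) :
    Relation.ReflTransGen (bruhatStep n) v w ↔ deodharLE n v w := by
  rw [deodhar_iff]
  constructor
  · intro h
    clear hv hw
    induction h with
    | refl => exact fun k _ t => le_rfl
    | tail hab hbc ih => exact fun k hk t => le_trans (ih k hk t) (BD.step_counts _ _ hbc k t)
  · intro h
    exact BD.backward w hw (BD.Mw n w - BD.Mw n v) v hv h rfl
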